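/- Fix integers d ≥ 2 and 1 ≤ ℓ ≤ d−1. There exists an integer N ≥ 1, depending only on ℓ and d, with the following property. Let B be a linear automorphism of ℂ^d admitting a basis of eigenvectors θ_1,…,θ_d whose eigenvalues are real and have pairwise distinct absolute values, and let W ⊆ ℂ^d be a subspace of dimension d−ℓ such that W ∩ span{θ_i : i ∈ S} = {0} for every S ⊆ {1,…,d} with #S = ℓ. Then for all integers 0 ≤ m_1 < m_2 < ⋯ < m_N there is no ℓ-dimensional subspace E ⊆ ℂ^d satisfying B^{m_u}(E) ∩ W ≠ {0} for every u = 1,…,N. (Equivalently, B^{−m_1}(V) ∩ ⋯ ∩ B^{−m_N}(V) = ∅ for the hyperplane section V = {E : dim E = ℓ, E ∩ W ≠ {0}}.) -/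

import Mathlib

open Polynomial Finset

lemma poly_zero_of_roots : ∀ (n : ℕ) (p : ℝ[X]), p.support.card ≤ n →
    ∀ x : Fin n → ℝ, StrictMono x → (∀ i, 0 < x i) → (∀ i, p.eval (x i) = 0) → p = 0 := by
  intro n
  induction n with
  | zero =>
    intro p hp _ _ _ _
    rwa [Nat.le_zero, Finset.card_eq_zero, Polynomial.support_eq_empty] at hp
  | succ n ih =>
    intro p hp x hx hxpos hroot
    by_contra hp0
    set τ := p.natTrailingDegree with hτ
    obtain ⟨q, hq⟩ : X ^ τ ∣ p :=
      X_pow_dvd_iff.mpr fun d hd => coeff_eq_zero_of_lt_natTrailingDegree hd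
    have hq' : p = q * X ^ τ := by rw [hq, mul_comm]
    have hq0 : q.coeff 0 ≠ 0 := by
      have h1 : p.coeff τ ≠ 0 := coeff_natTrailingDegree_ne_zero.mpr hp0
      rw [hq'] at h1
      simpa [coeff_mul_X_pow'] using h1
    have hsupp : p.support = q.support.image (· + τ) := by
      ext k
      simp only [mem_support_iff, hq', coeff_mul_X_pow', Finset.mem_image]
      constructor
      · intro h
        by_cases hk : τ ≤ k
        · rw [if_pos hk] at h
          exact ⟨k - τ, h, by omega⟩
        · rw [if_neg hk] at h; exact absurd rfl h
      · rintro ⟨a, ha, rfl⟩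
        rw [if_pos (by omega)]
        simpa using ha
    have hqcard : q.support.card ≤ n + 1 := by
      rw [hsupp, Finset.card_image_of_injective _ (add_left_injective τ)] at hp
      exact hp
    have hqroot : ∀ i, q.eval (x i) = 0 := by
      intro i
      have := hroot i
      rw [hq'] at this
      simp only [eval_mul, eval_pow, eval_X] at this
      rcases mul_eq_zero.mp this with h | h
      · exact h
      · exact absurd h (pow_ne_zero _ (hxpos i).ne')
    set D := derivative q with hD
    have hDsupp : D.support ⊆ (q.support.erase 0).image (· - 1) := by
      intro k hk
      have hck : q.coeff (k + 1) ≠ 0 := by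
        have := mem_support_iff.mp hk
        rw [hD, coeff_derivative] at this
        intro h; exact this (by rw [h]; ring)
      exact Finset.mem_image.mpr ⟨k + 1, Finset.mem_erase.mpr ⟨by omega, mem_support_iff.mpr hck⟩, by omega⟩
    have hDcard : D.support.card ≤ n := by
      calc D.support.card ≤ ((q.support.erase 0).image (· - 1)).card := Finset.card_le_card hDsupp
        _ ≤ (q.support.erase 0).card := Finset.card_image_le
        _ = q.support.card - 1 := by rw [Finset.card_erase_of_mem (mem_support_iff.mpr hq0)]
        _ ≤ n := by omega
    have hz : ∀ i : Fin n, ∃ z ∈ Set.Ioo (x i.castSucc) (x i.succ), D.eval z = 0 := by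
      intro i
      have hab : x i.castSucc < x i.succ := hx (Fin.castSucc_lt_succ (i := i))
      obtain ⟨c, hc, hc'⟩ := exists_deriv_eq_zero hab
        ((q.continuous).continuousOn) (by rw [hqroot, hqroot])
      exact ⟨c, hc, by rwa [Polynomial.deriv] at hc'⟩
    choose z hz1 hz2 using hz
    have hzmono : StrictMono z := by
      intro i j hij
      calc z i < x i.succ := (hz1 i).2
        _ ≤ x j.castSucc := hx.monotone (by
            have := Fin.lt_def.mp hij
            rw [Fin.le_def, Fin.val_succ, Fin.coe_castSucc]; omega)
        _ < z j := (hz1 j).1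
    have hD0 : D = 0 := ih D hDcard z hzmono
      (fun i => lt_trans (hxpos i.castSucc) (hz1 i).1) hz2
    have hqdeg : q.natDegree = 0 := natDegree_eq_zero_of_derivative_eq_zero hD0
    have hqC : q = C (q.coeff 0) := eq_C_of_natDegree_eq_zero hqdeg
    have := hqroot 0
    rw [hqC] at this
    simp at this
    exact hq0 this

lemma expsum_zero {K : ℕ} (R : Finset ℝ) (hpos : ∀ ρ ∈ R, (0:ℝ) < ρ) (hcard : R.card ≤ K)
    (t : Fin K → ℕ) (ht : StrictMono t) (b : ℝ → ℂ)
    (h : ∀ i, ∑ ρ ∈ R, b ρ * (ρ:ℂ) ^ (t i) = 0) : ∀ ρ ∈ R, b ρ = 0 := by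
  classical
  set n := R.card with hn
  let e : Fin n ≃o R := R.orderIsoOfFin rfl
  let t' : Fin n → ℕ := fun u => t (Fin.castLE hcard u)
  have ht' : StrictMono t' := fun a b hab => ht (by rw [Fin.lt_def, Fin.coe_castLE, Fin.coe_castLE]; exact hab)
  have ht'inj : Function.Injective t' := ht'.injective
  let V : Matrix (Fin n) (Fin n) ℝ := Matrix.of fun r u => (e r : ℝ) ^ (t' u)
  have hxmono : StrictMono (fun r => ((e r : ℝ))) := fun a b hab => e.strictMono hab
  have hxpos : ∀ r, (0:ℝ) < (e r : ℝ) := fun r => hpos _ (e r).2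
  have hdet : V.det ≠ 0 := by
    intro hdet
    obtain ⟨y, hy0, hy⟩ := Matrix.exists_mulVec_eq_zero_iff.mpr hdet
    set p : Polynomial ℝ := ∑ u : Fin n, Polynomial.C (y u) * Polynomial.X ^ (t' u) with hpdef
    have hcoeff : ∀ u, p.coeff (t' u) = y u := by
      intro u
      rw [hpdef, Polynomial.finset_sum_coeff]
      rw [Finset.sum_eq_single u]
      · rw [Polynomial.coeff_C_mul, Polynomial.coeff_X_pow, if_pos rfl, mul_one]
      · intro u' _ hne
        have h2 : t' u ≠ t' u' := fun hh => hne ((ht'inj hh).symm)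
        simp only [Polynomial.coeff_C_mul, Polynomial.coeff_X_pow, if_neg h2, mul_zero]
      · simp
    have hsupp : p.support ⊆ Finset.univ.image t' := by
      intro k hk
      have := Polynomial.mem_support_iff.mp hk
      by_contra hkim
      apply this
      rw [hpdef, Polynomial.finset_sum_coeff]
      apply Finset.sum_eq_zero
      intro u _
      have : t' u ≠ k := fun hh => hkim (by rw [← hh]; exact Finset.mem_image_of_mem _ (Finset.mem_univ u))
      simp [Polynomial.coeff_C_mul, Polynomial.coeff_X_pow, Ne.symm this]
    have hcard' : p.support.card ≤ n :=
      le_trans (Finset.card_le_card hsupp) (le_trans Finset.card_image_le (by simp))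
    have heval : ∀ r, p.eval ((e r : ℝ)) = 0 := by
      intro r
      have := congrFun hy r
      simp only [Matrix.mulVec, dotProduct, Pi.zero_apply] at this
      rw [hpdef]
      simp only [Polynomial.eval_finset_sum, Polynomial.eval_mul, Polynomial.eval_C,
        Polynomial.eval_pow, Polynomial.eval_X]
      rw [← this]
      apply Finset.sum_congr rfl
      intro u _
      simp [V, mul_comm]
    have hp0 : p = 0 := poly_zero_of_roots n p hcard' _ hxmono hxpos heval
    apply hy0
    funext u
    rw [← hcoeff u, hp0]
    simp
  -- complex side
  let Vc : Matrix (Fin n) (Fin n) ℂ := V.map (Complex.ofRealHom)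
  have hdetc : Vc.det ≠ 0 := by
    have h2 : Complex.ofRealHom.mapMatrix V = Vc := rfl
    rw [← h2, ← RingHom.map_det]
    simpa using hdet
  have hsum : ∀ ρ ∈ R, b ρ = 0 := by
    have hvec : Matrix.vecMul (fun r => b (e r)) Vc = 0 := by
      funext u
      have key : ∑ x : Fin n, b (e x) * Vc x u = 0 := by
        have h0 := h (Fin.castLE hcard u)
        rw [← Finset.sum_coe_sort R, ← Equiv.sum_comp e.toEquiv] at h0
        rw [← h0]
        apply Finset.sum_congr rfl
        intro r _
        simp only [Vc, V, Matrix.map_apply, Matrix.of_apply, Complex.ofRealHom_eq_coe, t']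
        norm_cast
      simpa [Matrix.vecMul, dotProduct] using key
    by_contra hb
    push_neg at hb
    obtain ⟨ρ, hρ, hbρ⟩ := hb
    have : ∃ v, v ≠ 0 ∧ Matrix.vecMul v Vc = 0 := by
      refine ⟨fun r => b (e r), ?_, hvec⟩
      intro hz
      apply hbρ
      have := congrFun hz (e.symm ⟨ρ, hρ⟩)
      simpa using this
    exact hdetc (Matrix.exists_vecMul_eq_zero_iff.mp this)
  exact hsum

lemma det_PDQ {l d : ℕ} (P : Matrix (Fin l) (Fin d) ℂ) (Q : Matrix (Fin d) (Fin l) ℂ)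
    (v : Fin d → ℂ) :
    (P * Matrix.diagonal v * Q).det =
      ∑ g : Fin l → Fin d, (∏ j, v (g j)) * ((∏ j, P j (g j)) *
        (Matrix.of fun j k => Q (g j) k).det) := by
  classical
  have hM : P * Matrix.diagonal v * Q = Matrix.of (fun j => ∑ i, (P j i * v i) • Q i) := by
    ext j k
    simp [Matrix.mul_apply, Matrix.diagonal_apply, mul_ite, ite_mul, zero_mul, mul_zero,
      Finset.sum_ite_eq, Finset.sum_apply]
  rw [hM]
  have hdet : (Matrix.of (fun j => ∑ i, (P j i * v i) • Q i)).det
      = Matrix.detRowAlternating (Matrix.of (fun j => ∑ i : Fin d, (P j i * v i) • Q i)) := rfl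
  rw [hdet]
  have hms := (Matrix.detRowAlternating (R := ℂ) (n := Fin l)).toMultilinearMap.map_sum
    (g := fun j i => (P j i * v i) • Q i)
  erw [hms]
  apply Finset.sum_congr rfl
  intro g _
  erw [(Matrix.detRowAlternating (R := ℂ) (n := Fin l)).toMultilinearMap.map_smul_univ
    (fun j => P j (g j) * v (g j)) (fun j => Q (g j))]
  simp only [smul_eq_mul]
  rw [Finset.prod_mul_distrib]
  rw [show (Matrix.of fun j k => Q (g j) k).det = Matrix.detRowAlternating (fun j => Q (g j)) from rfl]
  ring_nf
  rfl

lemma mono_subseq {M K : ℕ} (s : Finset (Fin M)) (h : K ≤ s.card) :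
    ∃ u : Fin K → Fin M, StrictMono u ∧ ∀ i, u i ∈ s := by
  let e := s.orderIsoOfFin rfl
  refine ⟨fun i => (e (Fin.castLE h i) : Fin M), ?_, fun i => (e (Fin.castLE h i)).2⟩
  intro a b hab
  have : Fin.castLE h a < Fin.castLE h b := by
    rw [Fin.lt_def, Fin.coe_castLE, Fin.coe_castLE]; exact hab
  exact e.strictMono this

lemma parity_extract {K : ℕ} (m : Fin (2 * K) → ℕ) (hm : StrictMono m) :
    ∃ p, p ≤ 1 ∧ ∃ t : Fin K → ℕ, StrictMono t ∧ ∀ i : Fin K, ∃ u, m u = 2 * t i + p := by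
  classical
  set s := Finset.univ.filter (fun u : Fin (2 * K) => m u % 2 = 0) with hs
  by_cases hK : K ≤ s.card
  · obtain ⟨u, hu, hus⟩ := mono_subseq s hK
    refine ⟨0, by omega, fun i => m (u i) / 2, ?_, ?_⟩
    · intro a b hab
      have h1 := hm (hu hab)
      have h2 := (Finset.mem_filter.mp (hus a)).2
      have h3 := (Finset.mem_filter.mp (hus b)).2
      show m (u a) / 2 < m (u b) / 2
      omega
    · intro i
      have h2 := (Finset.mem_filter.mp (hus i)).2
      refine ⟨u i, ?_⟩
      show m (u i) = 2 * (m (u i) / 2) + 0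
      omega
  · have hK' : K ≤ sᶜ.card := by
      have := Finset.card_add_card_compl s
      rw [Fintype.card_fin] at this
      omega
    obtain ⟨u, hu, hus⟩ := mono_subseq _ hK'
    have hmem : ∀ i, ¬ (m (u i) % 2 = 0) := by
      intro i
      have := Finset.mem_compl.mp (hus i)
      simpa [hs] using this
    refine ⟨1, le_refl 1, fun i => m (u i) / 2, ?_, ?_⟩
    · intro a b hab
      have h1 := hm (hu hab)
      have h2 := hmem a
      have h3 := hmem b
      show m (u a) / 2 < m (u b) / 2
      omega
    · intro i
      have h2 := hmem i
      refine ⟨u i, ?_⟩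
      show m (u i) = 2 * (m (u i) / 2) + 1
      omega

/-- **Proposition B.1.** There is `N = N(ℓ,d)` such that for every linear automorphism `B`
of `ℂ^d` with a basis of eigenvectors whose eigenvalues are real with pairwise distinct
absolute values, every `(d-ℓ)`-dimensional subspace `W` meeting every sum of `ℓ`
eigenspaces trivially, and all `0 ≤ m_1 < ⋯ < m_N`, there is no `ℓ`-dimensional subspace
`E` with `B^{m_u}(E) ∩ W ≠ {0}` for all `u`. -/
theorem stmt3 (d ℓ : ℕ) (hd : 2 ≤ d) (hℓ1 : 1 ≤ ℓ) (hℓd : ℓ ≤ d - 1) :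
    ∃ N : ℕ, 1 ≤ N ∧
      ∀ (B : (Fin d → ℂ) ≃ₗ[ℂ] (Fin d → ℂ)) (θ : Module.Basis (Fin d) ℂ (Fin d → ℂ))
        (μ : Fin d → ℝ),
        (∀ i, B (θ i) = (μ i : ℂ) • θ i) →
        (∀ i j, i ≠ j → |μ i| ≠ |μ j|) →
        ∀ W : Submodule ℂ (Fin d → ℂ), Module.finrank ℂ W = d - ℓ →
        (∀ S : Finset (Fin d), S.card = ℓ →
          W ⊓ Submodule.span ℂ (⇑θ '' (S : Set (Fin d))) = ⊥) →
        ∀ m : Fin N → ℕ, StrictMono m →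
        ¬ ∃ E : Submodule ℂ (Fin d → ℂ), Module.finrank ℂ E = ℓ ∧
          ∀ u : Fin N, E.map ((B ^ (m u)).toLinearMap) ⊓ W ≠ ⊥ := by
  classical
  refine ⟨2 * Nat.choose d ℓ, ?_, ?_⟩
  · have h1 : 0 < Nat.choose d ℓ := Nat.choose_pos (by omega)
    omega
  intro B θ μ hμ hdist W hWrank hWmeet m hm hEx
  obtain ⟨E, hErank, hEmeet⟩ := hEx
  have hℓle : ℓ ≤ d := by omega
  -- eigenvalues are nonzero
  have hμ0 : ∀ i, μ i ≠ 0 := by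
    intro i h
    have h2 := hμ i
    rw [h] at h2
    simp only [Complex.ofReal_zero, zero_smul] at h2
    exact θ.ne_zero i ((LinearEquiv.map_eq_zero_iff B).mp h2)
  -- the quotient map in coordinates
  have hrankQ : Module.finrank ℂ ((Fin d → ℂ) ⧸ W) = ℓ := by
    have h1 := Submodule.finrank_quotient_add_finrank W
    rw [hWrank, Module.finrank_fin_fun] at h1
    omega
  obtain ⟨eqv⟩ : Nonempty (((Fin d → ℂ) ⧸ W) ≃ₗ[ℂ] (Fin ℓ → ℂ)) :=
    FiniteDimensional.nonempty_linearEquiv_of_finrank_eq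
      (by rw [hrankQ, Module.finrank_fin_fun])
  set π : (Fin d → ℂ) →ₗ[ℂ] (Fin ℓ → ℂ) := eqv.toLinearMap ∘ₗ W.mkQ with hπdef
  have hπ : ∀ x, π x = 0 ↔ x ∈ W := by
    intro x
    rw [hπdef]
    simp only [LinearMap.coe_comp, Function.comp_apply, LinearEquiv.coe_coe]
    rw [LinearEquiv.map_eq_zero_iff]
    rw [Submodule.mkQ_apply, Submodule.Quotient.mk_eq_zero]
  -- coordinates
  set Θ := θ.equivFun with hΘdef
  have hB1 : ∀ (x : Fin d → ℂ) i, Θ (B x) i = (μ i : ℂ) * Θ x i := by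
    intro x i
    conv_lhs => rw [← θ.sum_equivFun x]
    rw [map_sum, map_sum, Finset.sum_apply]
    simp only [map_smul, hμ, hΘdef]
    simp only [Pi.smul_apply, Module.Basis.equivFun_self, smul_eq_mul, mul_ite, mul_one, mul_zero,
      Finset.sum_ite_eq, Finset.sum_ite_eq', Finset.mem_univ, if_true]
    ring
  have hΘB : ∀ (M : ℕ) (x : Fin d → ℂ) i, Θ ((B ^ M) x) i = (μ i : ℂ) ^ M * Θ x i := by
    intro M
    induction M with
    | zero => intro x i; simp
    | succ M ih =>
      intro x i
      have h1 : (B ^ (M + 1)) x = (B ^ M) (B x) := by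
        rw [pow_succ]; rfl
      rw [h1, ih (B x) i, hB1 x i, pow_succ]
      ring
  -- weights
  set w : Fin d → ℝ := fun i => |μ i| with hwdef
  have hwpos : ∀ i, 0 < w i := fun i => abs_pos.mpr (hμ0 i)
  have hwinj : Function.Injective w := by
    intro i j h
    by_contra hne
    exact hdist i j hne h
  have hlead_ex : ∀ x : Fin d → ℂ, x ≠ 0 →
      ∃ i, Θ x i ≠ 0 ∧ ∀ j, Θ x j ≠ 0 → w j ≤ w i := by
    intro x hx
    by_cases hall : ∀ i, Θ x i = 0
    · exact absurd ((LinearEquiv.map_eq_zero_iff Θ).mp (funext fun i => hall i)) hx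
    · push_neg at hall
      obtain ⟨i0, hi0⟩ := hall
      have hsupp : (Finset.univ.filter (fun i => Θ x i ≠ 0)).Nonempty :=
        ⟨i0, Finset.mem_filter.mpr ⟨Finset.mem_univ _, hi0⟩⟩
      obtain ⟨i, hi, hmax⟩ := Finset.exists_max_image _ w hsupp
      refine ⟨i, (Finset.mem_filter.mp hi).2, fun j hj => hmax j ?_⟩
      exact Finset.mem_filter.mpr ⟨Finset.mem_univ j, hj⟩
  set L : Finset (Fin d) :=
    Finset.univ.filter
      (fun i => ∃ x ∈ E, x ≠ 0 ∧ Θ x i ≠ 0 ∧ ∀ j, Θ x j ≠ 0 → w j ≤ w i) with hLdef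
  have hLle : L.card ≤ ℓ := by
    have hwit : ∀ i : {i // i ∈ L},
        ∃ x, x ∈ E ∧ x ≠ 0 ∧ Θ x (i : Fin d) ≠ 0 ∧ ∀ j, Θ x j ≠ 0 → w j ≤ w (i : Fin d) := by
      intro i
      have h2 := (Finset.mem_filter.mp i.2).2
      obtain ⟨x, hxE, h0, h1, h3⟩ := h2
      exact ⟨x, hxE, h0, h1, h3⟩
    choose xx hxE hx0 hxnz hxle using hwit
    have hli : LinearIndependent ℂ xx := by
      rw [linearIndependent_iff']
      intro s c hsum i hi
      by_contra hci
      set s' := s.filter (fun i => c i ≠ 0) with hs'def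
      have hs'ne : s'.Nonempty := ⟨i, Finset.mem_filter.mpr ⟨hi, hci⟩⟩
      obtain ⟨i₀, hi₀, hmax⟩ := Finset.exists_max_image s' (fun i => w i) hs'ne
      have hi₀s := (Finset.mem_filter.mp hi₀).1
      have hci₀ := (Finset.mem_filter.mp hi₀).2
      have h0 : Θ (∑ i' ∈ s, c i' • xx i') (i₀ : Fin d) = 0 := by rw [hsum]; simp
      rw [map_sum, Finset.sum_apply] at h0
      have hterm : ∀ i' ∈ s, i' ≠ i₀ → Θ (c i' • xx i') (i₀ : Fin d) = 0 := by
        intro i' hi' hne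
        by_cases hc : c i' = 0
        · simp [hc]
        · have hcoord : Θ (xx i') (i₀ : Fin d) = 0 := by
            by_contra hco
            have h1 := hxle i' _ hco
            have h2 := hmax i' (Finset.mem_filter.mpr ⟨hi', hc⟩)
            have h3 : (i' : Fin d) = (i₀ : Fin d) := hwinj (le_antisymm h2 h1)
            exact hne (Subtype.ext h3)
          rw [map_smul]
          simp [hcoord]
      rw [Finset.sum_eq_single i₀ hterm (fun h => absurd hi₀s h)] at h0
      rw [map_smul] at h0
      simp only [Pi.smul_apply, smul_eq_mul] at h0
      rcases mul_eq_zero.mp h0 with h | h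
      · exact hci₀ h
      · exact hxnz i₀ h
    have hli' : LinearIndependent ℂ (fun i : {i // i ∈ L} => (⟨xx i, hxE i⟩ : ↥E)) := by
      apply LinearIndependent.of_comp E.subtype
      exact hli
    have hcard := hli'.fintype_card_le_finrank
    rwa [hErank, Fintype.card_coe] at hcard
  have hproj_inj : ∀ x : Fin d → ℂ, x ∈ E → (∀ i ∈ L, Θ x i = 0) → x = 0 := by
    intro x hxE hzero
    by_contra hx0
    obtain ⟨i, hi1, hi2⟩ := hlead_ex x hx0
    have hiL : i ∈ L := Finset.mem_filter.mpr ⟨Finset.mem_univ _, ⟨x, hxE, hx0, hi1, hi2⟩⟩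
    exact hi1 (hzero i hiL)
  set pr : ↥E →ₗ[ℂ] ({i // i ∈ L} → ℂ) :=
    LinearMap.pi (fun i => (LinearMap.proj (i : Fin d)) ∘ₗ Θ.toLinearMap ∘ₗ E.subtype)
    with hprdef
  have hpr_apply : ∀ (z : ↥E) (i : {i // i ∈ L}), pr z i = Θ (z : Fin d → ℂ) (i : Fin d) := by
    intro z i; rfl
  have hprinj : Function.Injective pr := by
    rw [injective_iff_map_eq_zero]
    intro z hz
    have : (z : Fin d → ℂ) = 0 := by
      apply hproj_inj _ z.2
      intro i hiL
      have := congrFun hz ⟨i, hiL⟩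
      rwa [hpr_apply] at this
    exact Subtype.ext this
  have hLge : ℓ ≤ L.card := by
    have h1 := LinearMap.finrank_le_finrank_of_injective hprinj
    rwa [hErank, Module.finrank_pi, Fintype.card_coe] at h1
  have hLcard : L.card = ℓ := le_antisymm hLle hLge
  have hfinrankL : Module.finrank ℂ ({i // i ∈ L} → ℂ) = ℓ := by
    rw [Module.finrank_pi, Fintype.card_coe, hLcard]
  let prE : ↥E ≃ₗ[ℂ] ({i // i ∈ L} → ℂ) :=
    LinearMap.linearEquivOfInjective pr hprinj (by rw [hErank, hfinrankL])
  have hprE_apply : ∀ z, prE z = pr z := fun z => rfl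
  let f : {i // i ∈ L} → ↥E := fun i => prE.symm (Pi.single i 1)
  have hproj_f : ∀ i i' : {i // i ∈ L},
      Θ ((f i : ↥E) : Fin d → ℂ) (i' : Fin d) = if i' = i then 1 else 0 := by
    intro i i'
    have h1 : pr (f i) = Pi.single i 1 := by
      rw [← hprE_apply]; exact prE.apply_symm_apply _
    have h2 := congrFun h1 i'
    rw [hpr_apply] at h2
    rw [h2, Pi.single_apply]
  have hf0 : ∀ i, ((f i : ↥E) : Fin d → ℂ) ≠ 0 := by
    intro i h
    have h2 := hproj_f i i
    rw [h] at h2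
    simp at h2
  have hflead : ∀ i : {i // i ∈ L}, ∀ j,
      Θ ((f i : ↥E) : Fin d → ℂ) j ≠ 0 → w j ≤ w (i : Fin d) := by
    intro i j hj
    obtain ⟨i₀, h1, h2⟩ := hlead_ex _ (hf0 i)
    have hi₀L : i₀ ∈ L :=
      Finset.mem_filter.mpr ⟨Finset.mem_univ _, ⟨((f i : ↥E) : Fin d → ℂ), (f i).2, hf0 i, h1, h2⟩⟩
    have heq : i₀ = (i : Fin d) := by
      by_contra hne
      have hne' : (⟨i₀, hi₀L⟩ : {i // i ∈ L}) ≠ i := fun hh => hne (congrArg Subtype.val hh)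
      have h3 := hproj_f i ⟨i₀, hi₀L⟩
      rw [if_neg hne'] at h3
      exact h1 h3
    calc w j ≤ w i₀ := h2 j hj
      _ = w (i : Fin d) := by rw [heq]
  let eL : Fin ℓ ≃ {i // i ∈ L} := (finCongr hLcard.symm).trans L.equivFin.symm
  let g₀ : Fin ℓ → Fin d := fun k => ((eL k : {i // i ∈ L}) : Fin d)
  have hg₀inj : Function.Injective g₀ := fun a b h => eL.injective (Subtype.ext h)
  have hg₀L : ∀ k, g₀ k ∈ L := fun k => (eL k).2
  have hg₀im : Finset.univ.image g₀ = L := by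
    apply Finset.eq_of_subset_of_card_le
    · intro i hi
      obtain ⟨k, _, rfl⟩ := Finset.mem_image.mp hi
      exact hg₀L k
    · rw [Finset.card_image_of_injective _ hg₀inj, Finset.card_univ, Fintype.card_fin, hLcard]
  let bE : Module.Basis (Fin ℓ) ℂ ↥E := (((Pi.basisFun ℂ {i // i ∈ L}).map prE.symm).reindex eL.symm)
  have hbE : ∀ k, bE k = f (eL k) := by
    intro k
    rw [Module.Basis.reindex_apply, Module.Basis.map_apply]
    simp only [Equiv.symm_symm, f]
    congr 1
    ext i'
    simp [Pi.basisFun_apply, Pi.single_apply]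
  set P : Matrix (Fin ℓ) (Fin d) ℂ := Matrix.of (fun j i => π (θ i) j) with hPdef
  set Q : Matrix (Fin d) (Fin ℓ) ℂ :=
    Matrix.of (fun i k => Θ ((bE k : ↥E) : Fin d → ℂ) i) with hQdef
  have hdet0 : ∀ u, (P * Matrix.diagonal (fun i => (μ i : ℂ) ^ (m u)) * Q).det = 0 := by
    intro u
    obtain ⟨y, hy, hy0⟩ := Submodule.exists_mem_ne_zero_of_ne_bot (hEmeet u)
    obtain ⟨hymap, hyW⟩ := Submodule.mem_inf.mp hy
    obtain ⟨x, hxE, hxy⟩ := Submodule.mem_map.mp hymap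
    have hx0 : x ≠ 0 := by
      rintro rfl
      apply hy0
      rw [← hxy]
      simp
    set c : Fin ℓ → ℂ := bE.equivFun ⟨x, hxE⟩ with hcdef
    have hc0 : c ≠ 0 := by
      intro h
      apply hx0
      have h2 : (⟨x, hxE⟩ : ↥E) = 0 := by
        rw [hcdef] at h
        exact (LinearEquiv.map_eq_zero_iff bE.equivFun).mp h
      exact congrArg Subtype.val h2
    have hQc : Q.mulVec c = Θ x := by
      funext i
      have hxsum : ∑ k, c k • (bE k) = (⟨x, hxE⟩ : ↥E) := bE.sum_equivFun ⟨x, hxE⟩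
      have hxsum' : ∑ k, c k • ((bE k : ↥E) : Fin d → ℂ) = x := by
        have h3 : ((∑ k, c k • bE k : ↥E) : Fin d → ℂ) = x := by rw [hxsum]
        rw [← h3, AddSubmonoidClass.coe_finset_sum]
        exact Finset.sum_congr rfl fun k _ => rfl
      have hstep : Θ (∑ k, c k • ((bE k : ↥E) : Fin d → ℂ)) i
          = ∑ k, c k * Θ ((bE k : ↥E) : Fin d → ℂ) i := by
        rw [map_sum, Finset.sum_apply]
        apply Finset.sum_congr rfl
        intro k _
        rw [map_smul]
        rfl
      calc Q.mulVec c i = ∑ k, Q i k * c k := rfl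
        _ = ∑ k, c k * Θ ((bE k : ↥E) : Fin d → ℂ) i := by
            apply Finset.sum_congr rfl
            intro k _
            rw [mul_comm, hQdef]
            rfl
        _ = Θ (∑ k, c k • ((bE k : ↥E) : Fin d → ℂ)) i := hstep.symm
        _ = Θ x i := by rw [hxsum']
    have hDQ : (Matrix.diagonal (fun i => (μ i : ℂ) ^ (m u))).mulVec (Θ x)
        = Θ ((B ^ (m u)) x) := by
      funext i
      rw [Matrix.mulVec_diagonal, hΘB]
    have hPy : P.mulVec (Θ ((B ^ (m u)) x)) = π ((B ^ (m u)) x) := by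
      funext j
      have hsum := θ.sum_equivFun ((B ^ (m u)) x)
      rw [← hΘdef] at hsum
      have hstep : π (∑ i, Θ ((B ^ (m u)) x) i • θ i) j
          = ∑ i, Θ ((B ^ (m u)) x) i * π (θ i) j := by
        rw [map_sum, Finset.sum_apply]
        apply Finset.sum_congr rfl
        intro k _
        rw [map_smul]
        rfl
      calc P.mulVec (Θ ((B ^ (m u)) x)) j = ∑ i, P j i * Θ ((B ^ (m u)) x) i := rfl
        _ = ∑ i, Θ ((B ^ (m u)) x) i * π (θ i) j := by
            apply Finset.sum_congr rfl
            intro k _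
            rw [mul_comm, hPdef]
            rfl
        _ = π (∑ i, Θ ((B ^ (m u)) x) i • θ i) j := hstep.symm
        _ = π ((B ^ (m u)) x) j := by rw [hsum]
    have hmv : (P * Matrix.diagonal (fun i => (μ i : ℂ) ^ (m u)) * Q).mulVec c = 0 := by
      rw [← Matrix.mulVec_mulVec, ← Matrix.mulVec_mulVec, hQc, hDQ, hPy]
      have hπ0 : π ((B ^ (m u)) x) = 0 := by
        rw [hπ]
        have : (B ^ (m u)) x = y := hxy
        rw [this]
        exact hyW
      rw [hπ0]
    exact Matrix.exists_mulVec_eq_zero_iff.mp ⟨c, hc0, hmv⟩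
  set lam : (Fin ℓ → Fin d) → ℝ := fun g => ∏ j, μ (g j) with hlamdef
  set aco : (Fin ℓ → Fin d) → ℂ :=
    fun g => (∏ j, P j (g j)) * (Matrix.of fun j k => Q (g j) k).det with hacodef
  set Ginj := Finset.univ.filter (fun g : Fin ℓ → Fin d => Function.Injective g) with hGinjdef
  have hexp : ∀ M : ℕ,
      (P * Matrix.diagonal (fun i => (μ i : ℂ) ^ M) * Q).det
        = ∑ g ∈ Ginj, ((lam g : ℝ) : ℂ) ^ M * aco g := by
    intro M
    have h1 : ∑ g : Fin ℓ → Fin d, (∏ j, ((μ (g j) : ℂ)) ^ M) *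
          ((∏ j, P j (g j)) * (Matrix.of fun j k => Q (g j) k).det)
        = ∑ g ∈ Ginj, (∏ j, ((μ (g j) : ℂ)) ^ M) *
          ((∏ j, P j (g j)) * (Matrix.of fun j k => Q (g j) k).det) := by
      rw [hGinjdef]
      rw [Finset.sum_filter_of_ne]
      intro g _ hne
      by_contra hginj
      apply hne
      obtain ⟨a, b, hab, hne2⟩ := Function.not_injective_iff.mp hginj
      have hdz : (Matrix.of fun j k => Q (g j) k).det = 0 := by
        apply Matrix.det_zero_of_row_eq hne2
        funext k
        simp only [Matrix.of_apply, hab]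
      rw [hdz]
      ring
    rw [det_PDQ, h1]
    apply Finset.sum_congr rfl
    intro g _
    congr 1
    simp only [hlamdef]
    push_cast
    rw [Finset.prod_pow]
  obtain ⟨p, hp1, t, htmono, htm⟩ := parity_extract m hm
  set R : Finset ℝ := Ginj.image (fun g => (lam g) ^ 2) with hRdef
  have hRpos : ∀ ρ ∈ R, (0:ℝ) < ρ := by
    intro ρ hρ
    obtain ⟨g, hg, rfl⟩ := Finset.mem_image.mp hρ
    have hlam0 : lam g ≠ 0 := by
      simp only [hlamdef]
      exact Finset.prod_ne_zero_iff.mpr (fun j _ => hμ0 (g j))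
    exact lt_of_le_of_ne (sq_nonneg _) (Ne.symm (pow_ne_zero 2 hlam0))
  have hRcard : R.card ≤ Nat.choose d ℓ := by
    have hsub : R ⊆ (Finset.univ.powersetCard ℓ).image (fun T => ∏ i ∈ T, (μ i) ^ 2) := by
      intro ρ hρ
      obtain ⟨g, hg, rfl⟩ := Finset.mem_image.mp hρ
      have hginj : Function.Injective g := (Finset.mem_filter.mp hg).2
      refine Finset.mem_image.mpr ⟨Finset.univ.image g, ?_, ?_⟩
      · rw [Finset.mem_powersetCard]
        refine ⟨Finset.subset_univ _, ?_⟩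
        rw [Finset.card_image_of_injective _ hginj, Finset.card_univ, Fintype.card_fin]
      · rw [Finset.prod_image (fun a _ b _ h => hginj h)]
        simp only [hlamdef]
        rw [Finset.prod_pow]
    calc R.card ≤ ((Finset.univ.powersetCard ℓ).image (fun T => ∏ i ∈ T, (μ i) ^ 2)).card :=
          Finset.card_le_card hsub
      _ ≤ (Finset.univ.powersetCard ℓ).card := Finset.card_image_le
      _ = Nat.choose d ℓ := by
          rw [Finset.card_powersetCard, Finset.card_univ, Fintype.card_fin]
  set bb : ℝ → ℂ := fun ρ => ∑ g ∈ Ginj.filter (fun g => (lam g) ^ 2 = ρ),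
      ((lam g : ℝ) : ℂ) ^ p * aco g with hbbdef
  have heq : ∀ i : Fin (Nat.choose d ℓ), ∑ ρ ∈ R, bb ρ * (ρ : ℂ) ^ (t i) = 0 := by
    intro i
    obtain ⟨u, hu⟩ := htm i
    have h0 : ∑ g ∈ Ginj, ((lam g : ℝ) : ℂ) ^ (m u) * aco g = 0 := by
      rw [← hexp (m u)]
      exact hdet0 u
    rw [hu] at h0
    rw [← h0, hRdef]
    apply Finset.sum_image'
    intro g hg
    simp only [hbbdef]
    rw [Finset.sum_mul]
    apply Finset.sum_congr rfl
    intro g' hg'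
    have hg'f : (lam g') ^ 2 = (lam g) ^ 2 := (Finset.mem_filter.mp hg').2
    rw [← hg'f]
    push_cast
    rw [← pow_mul]
    ring
  have hbb0 := expsum_zero R hRpos hRcard t htmono bb heq
  set ρstar : ℝ := (lam g₀) ^ 2 with hρstardef
  have hg₀G : g₀ ∈ Ginj := Finset.mem_filter.mpr ⟨Finset.mem_univ _, hg₀inj⟩
  have hρR : ρstar ∈ R := Finset.mem_image.mpr ⟨g₀, hg₀G, rfl⟩
  have hzero := hbb0 ρstar hρR
  -- the Q-matrix at g₀ is the identity
  have hQg₀ : (Matrix.of fun j k => Q (g₀ j) k) = (1 : Matrix (Fin ℓ) (Fin ℓ) ℂ) := by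
    ext j k
    have h1 : Q (g₀ j) k = Θ ((f (eL k) : ↥E) : Fin d → ℂ) ((eL j : {i // i ∈ L}) : Fin d) := by
      rw [hQdef]
      simp only [Matrix.of_apply, hbE]
      try rfl
    rw [Matrix.of_apply, h1, hproj_f (eL k) (eL j), Matrix.one_apply]
    by_cases hjk : j = k
    · subst hjk
      simp
    · rw [if_neg (fun h => hjk (eL.injective h)), if_neg hjk]
  -- products of weights identity
  have habsprod : ∀ h : Fin ℓ → Fin d, ∏ j, w (h j) = |lam h| := by
    intro h
    simp only [hlamdef, hwdef]
    rw [Finset.abs_prod]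
  -- maximality: nonzero coefficient in the top fiber forces image = L
  have hmax : ∀ g, Function.Injective g → (lam g) ^ 2 = ρstar → aco g ≠ 0 →
      Finset.univ.image g = L := by
    intro g hginj hgρ hga
    have hdetQ : (Matrix.of fun j k => Q (g j) k).det ≠ 0 := by
      intro h
      apply hga
      simp only [hacodef]
      rw [h, mul_zero]
    have hperm : ∃ σ : Equiv.Perm (Fin ℓ), ∏ j, Q (g (σ j)) j ≠ 0 := by
      by_contra hc
      push_neg at hc
      apply hdetQ
      rw [Matrix.det_apply']
      apply Finset.sum_eq_zero
      intro σ _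
      have := hc σ
      simp only [Matrix.of_apply]
      rw [this, mul_zero]
    obtain ⟨σ, hσ⟩ := hperm
    have hfac : ∀ j, Q (g (σ j)) j ≠ 0 := by
      intro j h
      exact hσ (Finset.prod_eq_zero (Finset.mem_univ j) h)
    have hle : ∀ j, w (g (σ j)) ≤ w (g₀ j) := by
      intro j
      have h2 := hfac j
      rw [hQdef] at h2
      simp only [Matrix.of_apply, hbE] at h2
      exact hflead (eL j) _ h2
    have habs : ∏ j, w (g j) = ∏ j, w (g₀ j) := by
      rw [habsprod, habsprod]
      have h3 : (lam g) ^ 2 = (lam g₀) ^ 2 := hgρ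
      calc |lam g| = Real.sqrt ((lam g) ^ 2) := (Real.sqrt_sq_eq_abs _).symm
        _ = Real.sqrt ((lam g₀) ^ 2) := by rw [h3]
        _ = |lam g₀| := Real.sqrt_sq_eq_abs _
    have hpermprod : ∏ j, w (g (σ j)) = ∏ j, w (g j) :=
      Equiv.prod_comp σ (fun j => w (g j))
    have heach : ∀ j, w (g (σ j)) = w (g₀ j) := by
      by_contra hc
      push_neg at hc
      obtain ⟨j0, hj0⟩ := hc
      have hlt : ∏ j, w (g (σ j)) < ∏ j, w (g₀ j) :=
        Finset.prod_lt_prod (fun j _ => hwpos _) (fun j _ => hle j)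
          ⟨j0, Finset.mem_univ _, lt_of_le_of_ne (hle j0) hj0⟩
      rw [hpermprod, habs] at hlt
      exact lt_irrefl _ hlt
    have hgσ : ∀ j, g (σ j) = g₀ j := fun j => hwinj (heach j)
    rw [← hg₀im]
    ext i
    simp only [Finset.mem_image, Finset.mem_univ, true_and]
    constructor
    · rintro ⟨j, rfl⟩
      exact ⟨σ.symm j, by rw [← hgσ (σ.symm j)]; rw [Equiv.apply_symm_apply]⟩
    · rintro ⟨j, rfl⟩
      exact ⟨σ j, hgσ j⟩
  set fib := Ginj.filter (fun g => (lam g) ^ 2 = ρstar) with hfibdef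
  set fib' := fib.filter (fun g => Finset.univ.image g = L) with hfib'def
  have hsplit : bb ρstar = ∑ g ∈ fib', ((lam g : ℝ) : ℂ) ^ p * aco g := by
    rw [hbbdef]
    symm
    apply Finset.sum_subset (Finset.filter_subset _ _)
    intro g hg hg'
    have hgG : g ∈ Ginj := (Finset.mem_filter.mp hg).1
    have hgρ : (lam g) ^ 2 = ρstar := (Finset.mem_filter.mp hg).2
    have h1 : ¬ (Finset.univ.image g = L) := fun h => hg' (Finset.mem_filter.mpr ⟨hg, h⟩)
    have h2 : aco g = 0 := by
      by_contra h2
      exact h1 (hmax g (Finset.mem_filter.mp hgG).2 hgρ h2)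
    rw [h2, mul_zero]
  have hlamL : ∀ g : Fin ℓ → Fin d, Function.Injective g → Finset.univ.image g = L →
      lam g = lam g₀ := by
    have key : ∀ g : Fin ℓ → Fin d, Function.Injective g → Finset.univ.image g = L →
        lam g = ∏ i ∈ L, μ i := by
      intro g hginj him
      rw [← him, Finset.prod_image (fun a _ b _ hh => hginj hh)]
    intro g hginj him
    rw [key g hginj him, ← key g₀ hg₀inj hg₀im]
  have hfib'eq : fib' = Finset.univ.image (fun σ : Equiv.Perm (Fin ℓ) => g₀ ∘ σ) := by
    ext g
    simp only [hfib'def, hfibdef, Finset.mem_filter, Finset.mem_image, Finset.mem_univ, true_and]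
    constructor
    · rintro ⟨⟨hgG, hgρ⟩, him⟩
      have hginj : Function.Injective g := (Finset.mem_filter.mp hgG).2
      have hmem : ∀ j, g j ∈ L := by
        intro j
        rw [← him]
        exact Finset.mem_image_of_mem g (Finset.mem_univ j)
      set τ : Fin ℓ → Fin ℓ := fun j => eL.symm ⟨g j, hmem j⟩ with hτdef
      have hτinj : Function.Injective τ := by
        intro a b h
        apply hginj
        have h2 := congrArg (fun z => ((eL z : {i // i ∈ L}) : Fin d)) h
        simpa [hτdef, Equiv.apply_symm_apply] using h2
      refine ⟨Equiv.ofBijective τ (Finite.injective_iff_bijective.mp hτinj), ?_⟩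
      funext j
      show g₀ (τ j) = g j
      simp only [hτdef, g₀]
      rw [Equiv.apply_symm_apply]
    · rintro ⟨σ, rfl⟩
      have hinj : Function.Injective (g₀ ∘ σ) := hg₀inj.comp σ.injective
      have hlameq : lam (g₀ ∘ σ) = lam g₀ := by
        simp only [hlamdef]
        exact Equiv.prod_comp σ (fun j => μ (g₀ j))
      have himeq : Finset.univ.image (g₀ ∘ σ) = L := by
        rw [← hg₀im]
        ext i
        simp only [Finset.mem_image, Finset.mem_univ, true_and, Function.comp_apply]
        constructor
        · rintro ⟨j, rfl⟩
          exact ⟨σ j, rfl⟩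
        · rintro ⟨j, rfl⟩
          exact ⟨σ.symm j, by rw [Equiv.apply_symm_apply]⟩
      exact ⟨⟨Finset.mem_filter.mpr ⟨Finset.mem_univ _, hinj⟩, by rw [hlameq]⟩, himeq⟩
  set Pmat : Matrix (Fin ℓ) (Fin ℓ) ℂ := Matrix.of (fun j k => P k (g₀ j)) with hPmatdef
  have hsum2 : ∑ g ∈ fib', aco g = Pmat.det := by
    rw [hfib'eq]
    rw [Finset.sum_image (fun σ1 _ σ2 _ h => by
      ext j
      exact congrArg Fin.val (hg₀inj (congrFun h j)))]
    rw [Matrix.det_apply']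
    apply Finset.sum_congr rfl
    intro σ _
    have hQperm : (Matrix.of fun j k => Q ((g₀ ∘ σ) j) k).det
        = (Equiv.Perm.sign σ : ℂ) * (Matrix.of fun j k => Q (g₀ j) k).det := by
      have h2 := Matrix.det_permute σ (Matrix.of fun j k => Q (g₀ j) k)
      have h3 : (Matrix.of fun j k => Q (g₀ j) k).submatrix σ id
          = (Matrix.of fun j k => Q ((g₀ ∘ σ) j) k) := by
        ext j k
        rfl
      rw [h3] at h2
      rw [h2]
      try norm_cast
    simp only [hacodef]
    rw [hQperm, hQg₀, Matrix.det_one, mul_one]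
    simp only [hPmatdef, Matrix.of_apply, Function.comp_apply]
    try ring
  have hdetP : Pmat.det ≠ 0 := by
    intro hdet
    rw [← Matrix.det_transpose] at hdet
    obtain ⟨c, hc0, hc⟩ := Matrix.exists_mulVec_eq_zero_iff.mpr hdet
    set v : Fin d → ℂ := ∑ k, c k • θ (g₀ k) with hvdef
    have hπv : ∀ j, π v j = ∑ k, P j (g₀ k) * c k := by
      intro j
      rw [hvdef, map_sum, Finset.sum_apply]
      apply Finset.sum_congr rfl
      intro k _
      rw [map_smul]
      simp only [Pi.smul_apply, smul_eq_mul, hPdef, Matrix.of_apply]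
      ring
    have hvW : v ∈ W := by
      rw [← hπ]
      funext j
      show π v j = (0 : ℂ)
      rw [hπv j]
      have h4 := congrFun hc j
      simp only [Matrix.mulVec, dotProduct, Matrix.transpose_apply, Pi.zero_apply] at h4
      rw [← h4]
      apply Finset.sum_congr rfl
      intro k _
      simp only [hPmatdef, Matrix.of_apply]
    have hvspan : v ∈ Submodule.span ℂ (⇑θ '' (L : Set (Fin d))) := by
      rw [hvdef]
      apply Submodule.sum_mem
      intro k _
      apply Submodule.smul_mem
      apply Submodule.subset_span
      exact ⟨g₀ k, hg₀L k, rfl⟩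
    have hv0 : v = 0 := by
      have h5 := hWmeet L hLcard
      have h6 : v ∈ W ⊓ Submodule.span ℂ (⇑θ '' (L : Set (Fin d))) :=
        Submodule.mem_inf.mpr ⟨hvW, hvspan⟩
      rw [h5] at h6
      simpa using h6
    have hli := θ.linearIndependent.comp g₀ hg₀inj
    rw [Fintype.linearIndependent_iff] at hli
    apply hc0
    funext k
    exact hli c (by rw [← hvdef] at *; exact hv0) k
  have hlamg₀0 : ((lam g₀ : ℝ) : ℂ) ≠ 0 := by
    rw [Complex.ofReal_ne_zero]
    simp only [hlamdef]
    exact Finset.prod_ne_zero_iff.mpr (fun j _ => hμ0 (g₀ j))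
  apply absurd hzero
  rw [hsplit]
  have hfactor : ∑ g ∈ fib', ((lam g : ℝ) : ℂ) ^ p * aco g
      = ((lam g₀ : ℝ) : ℂ) ^ p * ∑ g ∈ fib', aco g := by
    rw [Finset.mul_sum]
    apply Finset.sum_congr rfl
    intro g hg
    have hgG : g ∈ Ginj := (Finset.mem_filter.mp ((Finset.mem_filter.mp hg).1)).1
    have hginj : Function.Injective g := (Finset.mem_filter.mp hgG).2
    have him : Finset.univ.image g = L := (Finset.mem_filter.mp hg).2
    rw [hlamL g hginj him]
  rw [hfactor, hsum2]
  exact mul_ne_zero (pow_ne_zero _ hlamg₀0) hdetP
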